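/- If f : ℝ → ℝ is 6 times continuously differentiable near x_j, f'(x_j) ≠ 0, and f''(x_j)f'''(x_j) ≠ 0, then for each k ∈ {0,1,2}, τ^Z/β_k = O(Δx³) as Δx → 0, and consequently the WENO-Z nonlinear weights ω^Z_k = α^Z_k / Σ_l α^Z_l with α^Z_k = γ_k(1 + τ^Z/β_k) satisfy ω^Z_k = γ_k + O(Δx³). -/

import Mathlib

open Filter Asymptotics Topology

private lemma abs_sub_le_of_uIcc {x₀ x y : ℝ} (hy : y ∈ Set.uIcc x₀ x) :
    |y - x₀| ≤ |x - x₀| := by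
  rcases Set.mem_uIcc.mp hy with ⟨h1, h2⟩ | ⟨h1, h2⟩ <;>
    rcases abs_cases (x - x₀) with ⟨hx, _⟩ | ⟨hx, _⟩ <;>
    rcases abs_cases (y - x₀) with ⟨hyy, _⟩ | ⟨hyy, _⟩ <;> linarith

private lemma mvt_step {g g' : ℝ → ℝ} {x₀ : ℝ} {n : ℕ} (h0 : g x₀ = 0)
    (hd : ∀ᶠ x in 𝓝 x₀, HasDerivAt g (g' x) x)
    (ho : g' =o[𝓝 x₀] fun x => (x - x₀) ^ n) :
    g =o[𝓝 x₀] fun x => (x - x₀) ^ (n + 1) := by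
  rw [isLittleO_iff] at ho ⊢
  intro c hc
  obtain ⟨δ, hδ, hball⟩ := Metric.eventually_nhds_iff.mp ((ho hc).and hd)
  rw [Metric.eventually_nhds_iff]
  refine ⟨δ, hδ, fun x hx => ?_⟩
  have hsub : ∀ y ∈ Set.uIcc x₀ x, dist y x₀ < δ := fun y hy => by
    rw [Real.dist_eq]
    calc |y - x₀| ≤ |x - x₀| := abs_sub_le_of_uIcc hy
    _ < δ := by rwa [Real.dist_eq] at hx
  have key := Convex.norm_image_sub_le_of_norm_hasDerivWithin_le
    (f := g) (f' := g') (s := Set.uIcc x₀ x) (C := c * |x - x₀| ^ n)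
    (fun y hy => (hball (hsub y hy)).2.hasDerivWithinAt)
    (fun y hy => by
      calc ‖g' y‖ ≤ c * ‖(y - x₀) ^ n‖ := (hball (hsub y hy)).1
      _ = c * |y - x₀| ^ n := by rw [norm_pow, Real.norm_eq_abs]
      _ ≤ c * |x - x₀| ^ n :=
          mul_le_mul_of_nonneg_left
            (pow_le_pow_left₀ (abs_nonneg _) (abs_sub_le_of_uIcc hy) n) hc.le)
    (convex_uIcc _ _) Set.left_mem_uIcc Set.right_mem_uIcc
  rw [h0, sub_zero] at key
  calc ‖g x‖ ≤ c * |x - x₀| ^ n * ‖x - x₀‖ := key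
  _ = c * ‖(x - x₀) ^ (n + 1)‖ := by
      rw [Real.norm_eq_abs, Real.norm_eq_abs, abs_pow]; ring

private lemma ev_hasDerivAt_iter {f : ℝ → ℝ} {x₀ : ℝ} (hf : ContDiffAt ℝ 6 f x₀)
    (m : ℕ) (hm : m < 6) :
    ∀ᶠ y in 𝓝 x₀, HasDerivAt (iteratedDeriv m f) (iteratedDeriv (m + 1) f y) y := by
  obtain ⟨u, hu, hcd⟩ := hf.contDiffOn le_rfl (by simp)
  obtain ⟨t, hts, ho, hx₀t⟩ := mem_nhds_iff.mp hu
  filter_upwards [ho.eventually_mem hx₀t] with y hy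
  have heq : Set.EqOn (iteratedDerivWithin m f t) (iteratedDeriv m f) t := fun z hz => by
    rw [iteratedDerivWithin_eq_iteratedFDerivWithin, iteratedFDerivWithin_of_isOpen m ho hz,
      iteratedDeriv_eq_iteratedFDeriv]
  have hdw : DifferentiableWithinAt ℝ (iteratedDerivWithin m f t) t y :=
    (hcd.mono hts).differentiableOn_iteratedDerivWithin (by exact_mod_cast hm)
      ho.uniqueDiffOn y hy
  have hda : DifferentiableAt ℝ (iteratedDerivWithin m f t) y :=
    hdw.differentiableAt (ho.mem_nhds hy)
  have hev : iteratedDerivWithin m f t =ᶠ[𝓝 y] iteratedDeriv m f :=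
    Filter.eventuallyEq_of_mem (ho.mem_nhds hy) heq
  have hda' : DifferentiableAt ℝ (iteratedDeriv m f) y := hev.differentiableAt_iff.mp hda
  have h2 := hda'.hasDerivAt
  rwa [show deriv (iteratedDeriv m f) y = iteratedDeriv (m + 1) f y by
    rw [iteratedDeriv_succ]] at h2

private lemma taylor_peano4 {f : ℝ → ℝ} {x₀ : ℝ} (hf : ContDiffAt ℝ 6 f x₀) :
    (fun x => f x - (f x₀ + deriv f x₀ * (x - x₀) + iteratedDeriv 2 f x₀ / 2 * (x - x₀) ^ 2
        + iteratedDeriv 3 f x₀ / 6 * (x - x₀) ^ 3 + iteratedDeriv 4 f x₀ / 24 * (x - x₀) ^ 4))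
      =o[𝓝 x₀] fun x => (x - x₀) ^ 4 := by
  set b := deriv f x₀ with hb
  set c := iteratedDeriv 2 f x₀ with hc
  set d := iteratedDeriv 3 f x₀ with hd
  set e := iteratedDeriv 4 f x₀ with he
  -- monomial derivative helper
  have mono : ∀ (k : ℕ) (C y : ℝ),
      HasDerivAt (fun x : ℝ => C * (x - x₀) ^ k) (C * k * (y - x₀) ^ (k - 1)) y := by
    intro k C y
    have h := (((hasDerivAt_id y).sub_const x₀).pow k).const_mul C
    refine h.congr_deriv ?_
    simp only [id_eq]
    ring
  have lin : ∀ (C y : ℝ), HasDerivAt (fun x : ℝ => C * (x - x₀)) C y := by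
    intro C y
    simpa using ((hasDerivAt_id y).sub_const x₀).const_mul C
  -- continuity of 4th derivative
  have hc4 : ContinuousAt (iteratedDeriv 4 f) x₀ :=
    ((ev_hasDerivAt_iter hf 4 (by norm_num)).self_of_nhds).differentiableAt.continuousAt
  have ho0 : (fun x => iteratedDeriv 4 f x - e) =o[𝓝 x₀] fun x => (x - x₀) ^ 0 := by
    simp only [pow_zero]
    rw [isLittleO_one_iff]
    simpa [he] using hc4.tendsto.sub (tendsto_const_nhds (x := e))
  -- level 1
  have hg1 : ∀ᶠ y in 𝓝 x₀,
      HasDerivAt (fun x => iteratedDeriv 3 f x - (d + e * (x - x₀)))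
        (iteratedDeriv 4 f y - e) y := by
    filter_upwards [ev_hasDerivAt_iter hf 3 (by norm_num)] with y hy
    exact hy.sub ((lin e y).const_add d)
  have ho1 : (fun x => iteratedDeriv 3 f x - (d + e * (x - x₀))) =o[𝓝 x₀]
      fun x => (x - x₀) ^ 1 := mvt_step (by simp [hd]) hg1 ho0
  -- level 2
  have hg2 : ∀ᶠ y in 𝓝 x₀,
      HasDerivAt (fun x => iteratedDeriv 2 f x - (c + d * (x - x₀) + e / 2 * (x - x₀) ^ 2))
        (iteratedDeriv 3 f y - (d + e * (y - x₀))) y := by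
    filter_upwards [ev_hasDerivAt_iter hf 2 (by norm_num)] with y hy
    have hp := (((lin d y).const_add c).add (mono 2 (e / 2) y))
    have : HasDerivAt (fun x => c + d * (x - x₀) + e / 2 * (x - x₀) ^ 2)
        (d + e * (y - x₀)) y := by
      refine hp.congr_deriv ?_
      push_cast
      ring
    exact hy.sub this
  have ho2 : (fun x => iteratedDeriv 2 f x - (c + d * (x - x₀) + e / 2 * (x - x₀) ^ 2))
      =o[𝓝 x₀] fun x => (x - x₀) ^ 2 := mvt_step (by simp [hc]) hg2 ho1
  -- level 3
  have hg3 : ∀ᶠ y in 𝓝 x₀,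
      HasDerivAt (fun x => deriv f x - (b + c * (x - x₀) + d / 2 * (x - x₀) ^ 2
          + e / 6 * (x - x₀) ^ 3))
        (iteratedDeriv 2 f y - (c + d * (y - x₀) + e / 2 * (y - x₀) ^ 2)) y := by
    filter_upwards [ev_hasDerivAt_iter hf 1 (by norm_num)] with y hy
    rw [iteratedDeriv_one] at hy
    have hp := ((((lin c y).const_add b).add (mono 2 (d / 2) y)).add (mono 3 (e / 6) y))
    have : HasDerivAt (fun x => b + c * (x - x₀) + d / 2 * (x - x₀) ^ 2 + e / 6 * (x - x₀) ^ 3)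
        (c + d * (y - x₀) + e / 2 * (y - x₀) ^ 2) y := by
      refine hp.congr_deriv ?_
      push_cast
      ring
    exact hy.sub this
  have ho3 : (fun x => deriv f x - (b + c * (x - x₀) + d / 2 * (x - x₀) ^ 2
      + e / 6 * (x - x₀) ^ 3)) =o[𝓝 x₀] fun x => (x - x₀) ^ 3 := mvt_step (by simp [hb]) hg3 ho2
  -- level 4
  have hg4 : ∀ᶠ y in 𝓝 x₀,
      HasDerivAt (fun x => f x - (f x₀ + b * (x - x₀) + c / 2 * (x - x₀) ^ 2
          + d / 6 * (x - x₀) ^ 3 + e / 24 * (x - x₀) ^ 4))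
        (deriv f y - (b + c * (y - x₀) + d / 2 * (y - x₀) ^ 2 + e / 6 * (y - x₀) ^ 3)) y := by
    filter_upwards [ev_hasDerivAt_iter hf 0 (by norm_num)] with y hy
    rw [iteratedDeriv_zero, iteratedDeriv_one] at hy
    have hp := (((((lin b y).const_add (f x₀)).add (mono 2 (c / 2) y)).add
      (mono 3 (d / 6) y)).add (mono 4 (e / 24) y))
    have : HasDerivAt (fun x => f x₀ + b * (x - x₀) + c / 2 * (x - x₀) ^ 2
        + d / 6 * (x - x₀) ^ 3 + e / 24 * (x - x₀) ^ 4)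
        (b + c * (y - x₀) + d / 2 * (y - x₀) ^ 2 + e / 6 * (y - x₀) ^ 3) y := by
      refine hp.congr_deriv ?_
      push_cast
      ring
    exact hy.sub this
  exact mvt_step (by simp) hg4 ho3

private lemma mulpow {k : ℕ} {q : ℝ → ℝ} (hq : ContinuousAt q 0) :
    (fun h : ℝ => h ^ k * q h) =O[𝓝 (0:ℝ)] fun h => h ^ k := by
  have h1 : q =O[𝓝 (0:ℝ)] (fun _ => (1:ℝ)) := hq.tendsto.isBigO_one ℝ
  simpa using (isBigO_refl (fun h : ℝ => h ^ k) (𝓝 0)).mul h1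

private lemma powle {j k : ℕ} (h : k ≤ j) :
    (fun x : ℝ => x ^ j) =O[𝓝 (0:ℝ)] fun x => x ^ k := by
  have heq : (fun x : ℝ => x ^ j) = fun x : ℝ => x ^ k * x ^ (j - k) := by
    funext x; rw [← pow_add]; congr 1; omega
  rw [heq]
  exact mulpow ((continuous_pow (j - k)).continuousAt)

private lemma mulO {p q : ℝ → ℝ} {i j t : ℕ} (hp : p =O[𝓝 (0:ℝ)] fun h => h ^ i)
    (hq : q =O[𝓝 (0:ℝ)] fun h => h ^ j) (ht : t ≤ i + j) :
    (fun h => p h * q h) =O[𝓝 (0:ℝ)] fun h => h ^ t := by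
  have h1 := hp.mul hq
  have h2 : (fun h : ℝ => h ^ i * h ^ j) = fun h : ℝ => h ^ (i + j) :=
    funext fun h => (pow_add h i j).symm
  rw [h2] at h1
  exact h1.trans (powle ht)

private lemma pow3_littleO_pow2 : (fun h : ℝ => h ^ 3) =o[𝓝 (0:ℝ)] fun h => h ^ 2 := by
  have hid : (fun h : ℝ => h) =o[𝓝 (0:ℝ)] (fun _ => (1:ℝ)) :=
    (isLittleO_one_iff ℝ).mpr (continuous_id.tendsto 0)
  exact ((isBigO_refl (fun h : ℝ => h ^ 2) (𝓝 0)).mul_isLittleO hid).congr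
    (fun h => by ring) (fun h => by ring)

set_option maxHeartbeats 2000000 in
private lemma core (f : ℝ → ℝ) (xj a b c d e : ℝ) (ha : f xj = a) (hb : b ≠ 0)
    (K1 : (fun h : ℝ => f (xj + h) - (a + b*h + c/2*h^2 + d/6*h^3 + e/24*h^4))
      =o[𝓝 (0:ℝ)] fun h => h^4)
    (K2 : (fun h : ℝ => f (xj + 2*h) - (a + 2*b*h + 2*c*h^2 + 4/3*d*h^3 + 2/3*e*h^4))
      =o[𝓝 (0:ℝ)] fun h => h^4)
    (Km1 : (fun h : ℝ => f (xj - h) - (a - b*h + c/2*h^2 - d/6*h^3 + e/24*h^4))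
      =o[𝓝 (0:ℝ)] fun h => h^4)
    (Km2 : (fun h : ℝ => f (xj - 2*h) - (a - 2*b*h + 2*c*h^2 - 4/3*d*h^3 + 2/3*e*h^4))
      =o[𝓝 (0:ℝ)] fun h => h^4) :
    (let β : ℝ → Fin 3 → ℝ := fun Δx => ![
      (13/12) * (f (xj - 2 * Δx) - 2 * f (xj - Δx) + f xj) ^ 2
        + (1/4) * (f (xj - 2 * Δx) - 4 * f (xj - Δx) + 3 * f xj) ^ 2,
      (13/12) * (f (xj - Δx) - 2 * f xj + f (xj + Δx)) ^ 2
        + (1/4) * (f (xj + Δx) - f (xj - Δx)) ^ 2,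
      (13/12) * (f xj - 2 * f (xj + Δx) + f (xj + 2 * Δx)) ^ 2
        + (1/4) * (3 * f xj - 4 * f (xj + Δx) + f (xj + 2 * Δx)) ^ 2];
    let τ : ℝ → ℝ := fun Δx => |β Δx 0 - β Δx 2|;
    let γ : Fin 3 → ℝ := ![1/10, 6/10, 3/10];
    let α : ℝ → Fin 3 → ℝ := fun Δx k => γ k * (1 + τ Δx / β Δx k);
    let ω : ℝ → Fin 3 → ℝ := fun Δx k => α Δx k / ∑ l, α Δx l;
    (∀ k : Fin 3, (fun Δx => τ Δx / β Δx k) =O[𝓝[>] (0 : ℝ)] fun Δx => Δx ^ 3) ∧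
    (∀ k : Fin 3, (fun Δx => ω Δx k - γ k) =O[𝓝[>] (0 : ℝ)] fun Δx => Δx ^ 3)) := by
  intro β τ γ α ω
  have hb2 : (0:ℝ) < b^2 := lt_of_le_of_ne (sq_nonneg b) (Ne.symm (pow_ne_zero 2 hb))
  -- remainder little-o facts
  have hRU0 : (fun h : ℝ => ((f (xj - 2*h) - 2*f (xj - h) + f xj) - (c*h^2 - d*h^3 + 7/12*e*h^4))) =o[𝓝 (0:ℝ)] fun h => h^4 :=
    (Km2.sub (Km1.const_mul_left 2)).congr_left (fun h => by rw [ha]; ring)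
  have hRU1 : (fun h : ℝ => ((f (xj - h) - 2*f xj + f (xj + h)) - (c*h^2 + 1/12*e*h^4))) =o[𝓝 (0:ℝ)] fun h => h^4 :=
    (Km1.add K1).congr_left (fun h => by rw [ha]; ring)
  have hRU2 : (fun h : ℝ => ((f xj - 2*f (xj + h) + f (xj + 2*h)) - (c*h^2 + d*h^3 + 7/12*e*h^4))) =o[𝓝 (0:ℝ)] fun h => h^4 :=
    (K2.sub (K1.const_mul_left 2)).congr_left (fun h => by rw [ha]; ring)
  have hRV0 : (fun h : ℝ => ((f (xj - 2*h) - 4*f (xj - h) + 3*f xj) - (2*b*h - 2/3*d*h^3 + 1/2*e*h^4))) =o[𝓝 (0:ℝ)] fun h => h^4 :=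
    (Km2.sub (Km1.const_mul_left 4)).congr_left (fun h => by rw [ha]; ring)
  have hRV1 : (fun h : ℝ => ((f (xj + h) - f (xj - h)) - (2*b*h + 1/3*d*h^3))) =o[𝓝 (0:ℝ)] fun h => h^4 :=
    (K1.sub Km1).congr_left (fun h => by ring)
  have hRV2 : (fun h : ℝ => ((3*f xj - 4*f (xj + h) + f (xj + 2*h)) - (-(2*b*h) + 2/3*d*h^3 + 1/2*e*h^4))) =o[𝓝 (0:ℝ)] fun h => h^4 :=
    (K2.sub (K1.const_mul_left 4)).congr_left (fun h => by rw [ha]; ring)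
  -- polynomial big-O facts
  have hPU0 : (fun h : ℝ => (c*h^2 - d*h^3 + 7/12*e*h^4)) =O[𝓝 (0:ℝ)] fun h => h^2 :=
    (mulpow (q := fun h => c - d*h + 7/12*e*h^2) (by fun_prop)).congr_left (fun h => by ring)
  have hPU1 : (fun h : ℝ => (c*h^2 + 1/12*e*h^4)) =O[𝓝 (0:ℝ)] fun h => h^2 :=
    (mulpow (q := fun h => c + 1/12*e*h^2) (by fun_prop)).congr_left (fun h => by ring)
  have hPU2 : (fun h : ℝ => (c*h^2 + d*h^3 + 7/12*e*h^4)) =O[𝓝 (0:ℝ)] fun h => h^2 :=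
    (mulpow (q := fun h => c + d*h + 7/12*e*h^2) (by fun_prop)).congr_left (fun h => by ring)
  have hPV0 : (fun h : ℝ => (2*b*h - 2/3*d*h^3 + 1/2*e*h^4)) =O[𝓝 (0:ℝ)] fun h => h^1 :=
    (mulpow (q := fun h => 2*b - 2/3*d*h^2 + 1/2*e*h^3) (by fun_prop)).congr_left (fun h => by ring)
  have hPV1 : (fun h : ℝ => (2*b*h + 1/3*d*h^3)) =O[𝓝 (0:ℝ)] fun h => h^1 :=
    (mulpow (q := fun h => 2*b + 1/3*d*h^2) (by fun_prop)).congr_left (fun h => by ring)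
  have hPV2 : (fun h : ℝ => (-(2*b*h) + 2/3*d*h^3 + 1/2*e*h^4)) =O[𝓝 (0:ℝ)] fun h => h^1 :=
    (mulpow (q := fun h => -(2*b) + 2/3*d*h^2 + 1/2*e*h^3) (by fun_prop)).congr_left (fun h => by ring)
  have hQV0 : (fun h : ℝ => (-(2/3)*d*h^3 + 1/2*e*h^4)) =O[𝓝 (0:ℝ)] fun h => h^3 :=
    (mulpow (q := fun h => -(2/3)*d + 1/2*e*h) (by fun_prop)).congr_left (fun h => by ring)
  have hQV1 : (fun h : ℝ => (1/3*d*h^3)) =O[𝓝 (0:ℝ)] fun h => h^3 :=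
    (mulpow (q := fun h => 1/3*d) (by fun_prop)).congr_left (fun h => by ring)
  have hQV2 : (fun h : ℝ => (2/3*d*h^3 + 1/2*e*h^4)) =O[𝓝 (0:ℝ)] fun h => h^3 :=
    (mulpow (q := fun h => 2/3*d + 1/2*e*h) (by fun_prop)).congr_left (fun h => by ring)
  have hSV0 : (fun h : ℝ => (4*b*h - 2/3*d*h^3 + 1/2*e*h^4)) =O[𝓝 (0:ℝ)] fun h => h^1 :=
    (mulpow (q := fun h => 4*b - 2/3*d*h^2 + 1/2*e*h^3) (by fun_prop)).congr_left (fun h => by ring)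
  have hSV1 : (fun h : ℝ => (4*b*h + 1/3*d*h^3)) =O[𝓝 (0:ℝ)] fun h => h^1 :=
    (mulpow (q := fun h => 4*b + 1/3*d*h^2) (by fun_prop)).congr_left (fun h => by ring)
  have hSV2 : (fun h : ℝ => (-(4*b*h) + 2/3*d*h^3 + 1/2*e*h^4)) =O[𝓝 (0:ℝ)] fun h => h^1 :=
    (mulpow (q := fun h => -(4*b) + 2/3*d*h^2 + 1/2*e*h^3) (by fun_prop)).congr_left (fun h => by ring)
  -- τ = O(h^5)
  have hbig : (fun h : ℝ => ((13/12) * (f (xj - 2*h) - 2*f (xj - h) + f xj) ^ 2 + (1/4) * (f (xj - 2*h) - 4*f (xj - h) + 3*f xj) ^ 2) - ((13/12) * (f xj - 2*f (xj + h) + f (xj + 2*h)) ^ 2 + (1/4) * (3*f xj - 4*f (xj + h) + f (xj + 2*h)) ^ 2)) =O[𝓝 (0:ℝ)] fun h => h^5 := by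
    have t1 : (fun h : ℝ => h^5 * (b*e - 13/3*c*d - 103/36*d*e*h^2)) =O[𝓝 (0:ℝ)]
        fun h => h^5 := mulpow (by fun_prop)
    have t2 := (mulO hPU0 hRU0.isBigO (by norm_num : 5 ≤ 2 + 4)).const_mul_left (13/6)
    have t3 := (mulO hPU2 hRU2.isBigO (by norm_num : 5 ≤ 2 + 4)).const_mul_left (13/6)
    have t4 := (mulO hRU0.isBigO hRU0.isBigO (by norm_num : 5 ≤ 4 + 4)).const_mul_left (13/12)
    have t5 := (mulO hRU2.isBigO hRU2.isBigO (by norm_num : 5 ≤ 4 + 4)).const_mul_left (13/12)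
    have t6 := (mulO hPV0 hRV0.isBigO (by norm_num : 5 ≤ 1 + 4)).const_mul_left (1/2)
    have t7 := (mulO hPV2 hRV2.isBigO (by norm_num : 5 ≤ 1 + 4)).const_mul_left (1/2)
    have t8 := (mulO hRV0.isBigO hRV0.isBigO (by norm_num : 5 ≤ 4 + 4)).const_mul_left (1/4)
    have t9 := (mulO hRV2.isBigO hRV2.isBigO (by norm_num : 5 ≤ 4 + 4)).const_mul_left (1/4)
    exact ((((((((t1.add t2).sub t3).add t4).sub t5).add t6).sub t7).add t8).sub t9).congr_left
      (fun h => by ring)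
  -- β_k - b²h² = O(h³)
  have hk0 : (fun h : ℝ => ((13/12) * (f (xj - 2*h) - 2*f (xj - h) + f xj) ^ 2 + (1/4) * (f (xj - 2*h) - 4*f (xj - h) + 3*f xj) ^ 2) - b^2*h^2) =O[𝓝 (0:ℝ)] fun h => h^3 := by
    have s1 := (mulO hPU0 hPU0 (by norm_num : 3 ≤ 2 + 2)).const_mul_left (13/12)
    have s2 := (mulO hPU0 hRU0.isBigO (by norm_num : 3 ≤ 2 + 4)).const_mul_left (13/6)
    have s3 := (mulO hRU0.isBigO hRU0.isBigO (by norm_num : 3 ≤ 4 + 4)).const_mul_left (13/12)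
    have s4 := (mulO hQV0 hSV0 (by norm_num : 3 ≤ 3 + 1)).const_mul_left (1/4)
    have s5 := (mulO hPV0 hRV0.isBigO (by norm_num : 3 ≤ 1 + 4)).const_mul_left (1/2)
    have s6 := (mulO hRV0.isBigO hRV0.isBigO (by norm_num : 3 ≤ 4 + 4)).const_mul_left (1/4)
    exact (((((s1.add s2).add s3).add s4).add s5).add s6).congr_left (fun h => by ring)
  have hk1 : (fun h : ℝ => ((13/12) * (f (xj - h) - 2*f xj + f (xj + h)) ^ 2 + (1/4) * (f (xj + h) - f (xj - h)) ^ 2) - b^2*h^2) =O[𝓝 (0:ℝ)] fun h => h^3 := by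
    have s1 := (mulO hPU1 hPU1 (by norm_num : 3 ≤ 2 + 2)).const_mul_left (13/12)
    have s2 := (mulO hPU1 hRU1.isBigO (by norm_num : 3 ≤ 2 + 4)).const_mul_left (13/6)
    have s3 := (mulO hRU1.isBigO hRU1.isBigO (by norm_num : 3 ≤ 4 + 4)).const_mul_left (13/12)
    have s4 := (mulO hQV1 hSV1 (by norm_num : 3 ≤ 3 + 1)).const_mul_left (1/4)
    have s5 := (mulO hPV1 hRV1.isBigO (by norm_num : 3 ≤ 1 + 4)).const_mul_left (1/2)
    have s6 := (mulO hRV1.isBigO hRV1.isBigO (by norm_num : 3 ≤ 4 + 4)).const_mul_left (1/4)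
    exact (((((s1.add s2).add s3).add s4).add s5).add s6).congr_left (fun h => by ring)
  have hk2 : (fun h : ℝ => ((13/12) * (f xj - 2*f (xj + h) + f (xj + 2*h)) ^ 2 + (1/4) * (3*f xj - 4*f (xj + h) + f (xj + 2*h)) ^ 2) - b^2*h^2) =O[𝓝 (0:ℝ)] fun h => h^3 := by
    have s1 := (mulO hPU2 hPU2 (by norm_num : 3 ≤ 2 + 2)).const_mul_left (13/12)
    have s2 := (mulO hPU2 hRU2.isBigO (by norm_num : 3 ≤ 2 + 4)).const_mul_left (13/6)
    have s3 := (mulO hRU2.isBigO hRU2.isBigO (by norm_num : 3 ≤ 4 + 4)).const_mul_left (13/12)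
    have s4 := (mulO hQV2 hSV2 (by norm_num : 3 ≤ 3 + 1)).const_mul_left (1/4)
    have s5 := (mulO hPV2 hRV2.isBigO (by norm_num : 3 ≤ 1 + 4)).const_mul_left (1/2)
    have s6 := (mulO hRV2.isBigO hRV2.isBigO (by norm_num : 3 ≤ 4 + 4)).const_mul_left (1/4)
    exact (((((s1.add s2).add s3).add s4).add s5).add s6).congr_left (fun h => by ring)
  -- lower bounds
  have lowb : ∀ Bk : ℝ → ℝ, ((fun h : ℝ => Bk h - b^2*h^2) =O[𝓝 (0:ℝ)] fun h => h^3) →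
      ∀ᶠ h in 𝓝[>] (0:ℝ), b^2/2*h^2 ≤ Bk h := by
    intro Bk hBk
    have hd := (hBk.trans_isLittleO pow3_littleO_pow2).def (show (0:ℝ) < b^2/2 by linarith)
    filter_upwards [Filter.Eventually.filter_mono nhdsWithin_le_nhds hd] with h hh
    rw [Real.norm_eq_abs, Real.norm_eq_abs, abs_of_nonneg (sq_nonneg h)] at hh
    have h2 := abs_le.mp hh
    nlinarith [h2.1, sq_nonneg h]
  have hl0 := lowb _ hk0
  have hl1 := lowb _ hk1
  have hl2 := lowb _ hk2
  -- τ bound with abs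
  have hT5 : (fun h : ℝ => |((13/12) * (f (xj - 2*h) - 2*f (xj - h) + f xj) ^ 2 + (1/4) * (f (xj - 2*h) - 4*f (xj - h) + 3*f xj) ^ 2) - ((13/12) * (f xj - 2*f (xj + h) + f (xj + 2*h)) ^ 2 + (1/4) * (3*f xj - 4*f (xj + h) + f (xj + 2*h)) ^ 2)|) =O[𝓝 (0:ℝ)] fun h => h^5 :=
    hbig.norm_left.congr_left (fun h => by rw [Real.norm_eq_abs])
  -- the division bound
  have divO : ∀ Bk : ℝ → ℝ, (∀ᶠ h in 𝓝[>] (0:ℝ), b^2/2*h^2 ≤ Bk h) →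
      (fun h : ℝ => |((13/12) * (f (xj - 2*h) - 2*f (xj - h) + f xj) ^ 2 + (1/4) * (f (xj - 2*h) - 4*f (xj - h) + 3*f xj) ^ 2) - ((13/12) * (f xj - 2*f (xj + h) + f (xj + 2*h)) ^ 2 + (1/4) * (3*f xj - 4*f (xj + h) + f (xj + 2*h)) ^ 2)| / Bk h) =O[𝓝[>] (0:ℝ)] fun h => h^3 := by
    intro Bk hlow
    obtain ⟨C, hC⟩ := isBigO_iff.mp hT5
    rw [isBigO_iff]
    refine ⟨2*C/b^2, ?_⟩
    filter_upwards [Filter.Eventually.filter_mono nhdsWithin_le_nhds hC, hlow,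
      self_mem_nhdsWithin] with h h1 h2 h3
    have hh : (0:ℝ) < h := h3
    have hh2 : (0:ℝ) < h^2 := by positivity
    have hBk : 0 < Bk h := lt_of_lt_of_le (by nlinarith) h2
    have hTnn : (0:ℝ) ≤ |((13/12) * (f (xj - 2*h) - 2*f (xj - h) + f xj) ^ 2 + (1/4) * (f (xj - 2*h) - 4*f (xj - h) + 3*f xj) ^ 2) - ((13/12) * (f xj - 2*f (xj + h) + f (xj + 2*h)) ^ 2 + (1/4) * (3*f xj - 4*f (xj + h) + f (xj + 2*h)) ^ 2)| := abs_nonneg _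
    have hnum : |((13/12) * (f (xj - 2*h) - 2*f (xj - h) + f xj) ^ 2 + (1/4) * (f (xj - 2*h) - 4*f (xj - h) + 3*f xj) ^ 2) - ((13/12) * (f xj - 2*f (xj + h) + f (xj + 2*h)) ^ 2 + (1/4) * (3*f xj - 4*f (xj + h) + f (xj + 2*h)) ^ 2)| ≤ C * h^5 := by
      rw [Real.norm_eq_abs, abs_abs, Real.norm_eq_abs,
        abs_of_pos (show (0:ℝ) < h^5 by positivity)] at h1
      exact h1
    rw [Real.norm_eq_abs, Real.norm_eq_abs, abs_of_pos (show (0:ℝ) < h^3 by positivity),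
      abs_of_nonneg (div_nonneg hTnn hBk.le)]
    have hb' : b ≠ 0 := hb
    have hh' : h ≠ 0 := ne_of_gt hh
    calc |((13/12) * (f (xj - 2*h) - 2*f (xj - h) + f xj) ^ 2 + (1/4) * (f (xj - 2*h) - 4*f (xj - h) + 3*f xj) ^ 2) - ((13/12) * (f xj - 2*f (xj + h) + f (xj + 2*h)) ^ 2 + (1/4) * (3*f xj - 4*f (xj + h) + f (xj + 2*h)) ^ 2)| / Bk h ≤ (C*h^5) / (b^2/2*h^2) :=
          div_le_div₀ (le_trans hTnn hnum) hnum (by nlinarith) h2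
    _ = 2*C/b^2 * h^3 := by field_simp
  have hdiv0 := divO _ hl0
  have hdiv1 := divO _ hl1
  have hdiv2 := divO _ hl2
  constructor
  · intro k
    fin_cases k
    · exact hdiv0
    · exact hdiv1
    · exact hdiv2
  · -- second part
    have hEO : (fun h : ℝ => 1/10*(|((13/12) * (f (xj - 2*h) - 2*f (xj - h) + f xj) ^ 2 + (1/4) * (f (xj - 2*h) - 4*f (xj - h) + 3*f xj) ^ 2) - ((13/12) * (f xj - 2*f (xj + h) + f (xj + 2*h)) ^ 2 + (1/4) * (3*f xj - 4*f (xj + h) + f (xj + 2*h)) ^ 2)| / ((13/12) * (f (xj - 2*h) - 2*f (xj - h) + f xj) ^ 2 + (1/4) * (f (xj - 2*h) - 4*f (xj - h) + 3*f xj) ^ 2)) + 6/10*(|((13/12) * (f (xj - 2*h) - 2*f (xj - h) + f xj) ^ 2 + (1/4) * (f (xj - 2*h) - 4*f (xj - h) + 3*f xj) ^ 2) - ((13/12) * (f xj - 2*f (xj + h) + f (xj + 2*h)) ^ 2 + (1/4) * (3*f xj - 4*f (xj + h) + f (xj + 2*h)) ^ 2)| / ((13/12) * (f (xj - h) - 2*f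 xj + f (xj + h)) ^ 2 + (1/4) * (f (xj + h) - f (xj - h)) ^ 2)) + 3/10*(|((13/12) * (f (xj - 2*h) - 2*f (xj - h) + f xj) ^ 2 + (1/4) * (f (xj - 2*h) - 4*f (xj - h) + 3*f xj) ^ 2) - ((13/12) * (f xj - 2*f (xj + h) + f (xj + 2*h)) ^ 2 + (1/4) * (3*f xj - 4*f (xj + h) + f (xj + 2*h)) ^ 2)| / ((13/12) * (f xj - 2*f (xj + h) + f (xj + 2*h)) ^ 2 + (1/4) * (3*f xj - 4*f (xj + h) + f (xj + 2*h)) ^ 2)))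
        =O[𝓝[>] (0:ℝ)] fun h => h^3 :=
      ((hdiv0.const_mul_left (1/10)).add (hdiv1.const_mul_left (6/10))).add
        (hdiv2.const_mul_left (3/10))
    have hp3 : Tendsto (fun h : ℝ => h^3) (𝓝[>] (0:ℝ)) (𝓝 0) := by
      have := (continuous_pow 3).tendsto (0:ℝ)
      rw [show (0:ℝ)^3 = 0 by norm_num] at this
      exact this.mono_left nhdsWithin_le_nhds
    have hEt := hEO.trans_tendsto hp3
    have hEb : ∀ᶠ h in 𝓝[>] (0:ℝ),
        |1/10*(|((13/12) * (f (xj - 2*h) - 2*f (xj - h) + f xj) ^ 2 + (1/4) * (f (xj - 2*h) - 4*f (xj - h) + 3*f xj) ^ 2) - ((13/12) * (f xj - 2*f (xj + h) + f (xj + 2*h)) ^ 2 + (1/4) * (3*f xj - 4*f (xj + h) + f (xj + 2*h)) ^ 2)| / ((13/12) * (f (xj - 2*h) - 2*f (xj - h) + f xj) ^ 2 + (1/4) * (f (xj - 2*h) - 4*f (xj - h) + 3*f xj) ^ 2)) + 6/10*(|((13/12) * (f (xj - 2*h) - 2*f (xj - h) + f xj) ^ 2 + (1/4) * (f (xj -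 2*h) - 4*f (xj - h) + 3*f xj) ^ 2) - ((13/12) * (f xj - 2*f (xj + h) + f (xj + 2*h)) ^ 2 + (1/4) * (3*f xj - 4*f (xj + h) + f (xj + 2*h)) ^ 2)| / ((13/12) * (f (xj - h) - 2*f xj + f (xj + h)) ^ 2 + (1/4) * (f (xj + h) - f (xj - h)) ^ 2)) + 3/10*(|((13/12) * (f (xj - 2*h) - 2*f (xj - h) + f xj) ^ 2 + (1/4) * (f (xj - 2*h) - 4*f (xj - h) + 3*f xj) ^ 2) - ((13/12) * (f xj - 2*f (xj + h) + f (xj + 2*h)) ^ 2 + (1/4) * (3*f xj - 4*f (xj + h) + f (xj + 2*h)) ^ 2)| / ((13/12) * (f xj - 2*f (xj + h) + f (xj + 2*h)) ^ 2 + (1/4) * (3*f xj - 4*f (xj + h) + f (xj + 2*h)) ^ 2))| < 1/2 := by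
      have := hEt.eventually (eventually_abs_sub_lt 0 (by norm_num : (0:ℝ) < 1/2))
      simpa using this
    have hN0 : (fun h : ℝ => 1/10*(|((13/12) * (f (xj - 2*h) - 2*f (xj - h) + f xj) ^ 2 + (1/4) * (f (xj - 2*h) - 4*f (xj - h) + 3*f xj) ^ 2) - ((13/12) * (f xj - 2*f (xj + h) + f (xj + 2*h)) ^ 2 + (1/4) * (3*f xj - 4*f (xj + h) + f (xj + 2*h)) ^ 2)| / ((13/12) * (f (xj - 2*h) - 2*f (xj - h) + f xj) ^ 2 + (1/4) * (f (xj - 2*h) - 4*f (xj - h) + 3*f xj) ^ 2))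
        - 1/10*(1/10*(|((13/12) * (f (xj - 2*h) - 2*f (xj - h) + f xj) ^ 2 + (1/4) * (f (xj - 2*h) - 4*f (xj - h) + 3*f xj) ^ 2) - ((13/12) * (f xj - 2*f (xj + h) + f (xj + 2*h)) ^ 2 + (1/4) * (3*f xj - 4*f (xj + h) + f (xj + 2*h)) ^ 2)| / ((13/12) * (f (xj - 2*h) - 2*f (xj - h) + f xj) ^ 2 + (1/4) * (f (xj - 2*h) - 4*f (xj - h) + 3*f xj) ^ 2)) + 6/10*(|((13/12) * (f (xj - 2*h) - 2*f (xj - h) + f xj) ^ 2 + (1/4) * (f (xj - 2*h) - 4*f (xj - h) + 3*f xj) ^ 2) - ((13/12) * (f xj - 2*f (xj + h) + f (xj + 2*h)) ^ 2 + (1/4) * (3*f xj - 4*f (xj + h) + f (xj + 2*h)) ^ 2)| / ((13/12) * (f (xj - h) - 2*f xj + f (xj + h)) ^ 2 + (1/4) * (f (xj + h) - f (xj - h)) ^ 2)) + 3/10*(|((13/12) * (f (xj - 2*h) - 2*f (xj - h) + f xj) ^ 2 + (1/4) * (f (xj - 2*h) - 4*f (xj - h) + 3*f xj) ^ 2) -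 ((13/12) * (f xj - 2*f (xj + h) + f (xj + 2*h)) ^ 2 + (1/4) * (3*f xj - 4*f (xj + h) + f (xj + 2*h)) ^ 2)| / ((13/12) * (f xj - 2*f (xj + h) + f (xj + 2*h)) ^ 2 + (1/4) * (3*f xj - 4*f (xj + h) + f (xj + 2*h)) ^ 2)))) =O[𝓝[>] (0:ℝ)] fun h => h^3 :=
      (hdiv0.const_mul_left (1/10)).sub (hEO.const_mul_left (1/10))
    have hN1 : (fun h : ℝ => 6/10*(|((13/12) * (f (xj - 2*h) - 2*f (xj - h) + f xj) ^ 2 + (1/4) * (f (xj - 2*h) - 4*f (xj - h) + 3*f xj) ^ 2) - ((13/12) * (f xj - 2*f (xj + h) + f (xj + 2*h)) ^ 2 + (1/4) * (3*f xj - 4*f (xj + h) + f (xj + 2*h)) ^ 2)| / ((13/12) * (f (xj - h) - 2*f xj + f (xj + h)) ^ 2 + (1/4) * (f (xj + h) - f (xj - h)) ^ 2))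
        - 6/10*(1/10*(|((13/12) * (f (xj - 2*h) - 2*f (xj - h) + f xj) ^ 2 + (1/4) * (f (xj - 2*h) - 4*f (xj - h) + 3*f xj) ^ 2) - ((13/12) * (f xj - 2*f (xj + h) + f (xj + 2*h)) ^ 2 + (1/4) * (3*f xj - 4*f (xj + h) + f (xj + 2*h)) ^ 2)| / ((13/12) * (f (xj - 2*h) - 2*f (xj - h) + f xj) ^ 2 + (1/4) * (f (xj - 2*h) - 4*f (xj - h) + 3*f xj) ^ 2)) + 6/10*(|((13/12) * (f (xj - 2*h) - 2*f (xj - h) + f xj) ^ 2 + (1/4) * (f (xj - 2*h) - 4*f (xj - h) + 3*f xj) ^ 2) - ((13/12) * (f xj - 2*f (xj + h) + f (xj + 2*h)) ^ 2 + (1/4) * (3*f xj - 4*f (xj + h) + f (xj + 2*h)) ^ 2)| / ((13/12) * (f (xj - h) - 2*f xj + f (xj + h)) ^ 2 + (1/4) * (f (xj + h) - f (xj - h)) ^ 2)) + 3/10*(|((13/12) * (f (xj - 2*h) - 2*f (xj - h) + f xj) ^ 2 + (1/4) * (f (xj - 2*h) - 4*f (xj - h) + 3*f xj) ^ 2) -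 ((13/12) * (f xj - 2*f (xj + h) + f (xj + 2*h)) ^ 2 + (1/4) * (3*f xj - 4*f (xj + h) + f (xj + 2*h)) ^ 2)| / ((13/12) * (f xj - 2*f (xj + h) + f (xj + 2*h)) ^ 2 + (1/4) * (3*f xj - 4*f (xj + h) + f (xj + 2*h)) ^ 2)))) =O[𝓝[>] (0:ℝ)] fun h => h^3 :=
      (hdiv1.const_mul_left (6/10)).sub (hEO.const_mul_left (6/10))
    have hN2 : (fun h : ℝ => 3/10*(|((13/12) * (f (xj - 2*h) - 2*f (xj - h) + f xj) ^ 2 + (1/4) * (f (xj - 2*h) - 4*f (xj - h) + 3*f xj) ^ 2) - ((13/12) * (f xj - 2*f (xj + h) + f (xj + 2*h)) ^ 2 + (1/4) * (3*f xj - 4*f (xj + h) + f (xj + 2*h)) ^ 2)| / ((13/12) * (f xj - 2*f (xj + h) + f (xj + 2*h)) ^ 2 + (1/4) * (3*f xj - 4*f (xj + h) + f (xj + 2*h)) ^ 2))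
        - 3/10*(1/10*(|((13/12) * (f (xj - 2*h) - 2*f (xj - h) + f xj) ^ 2 + (1/4) * (f (xj - 2*h) - 4*f (xj - h) + 3*f xj) ^ 2) - ((13/12) * (f xj - 2*f (xj + h) + f (xj + 2*h)) ^ 2 + (1/4) * (3*f xj - 4*f (xj + h) + f (xj + 2*h)) ^ 2)| / ((13/12) * (f (xj - 2*h) - 2*f (xj - h) + f xj) ^ 2 + (1/4) * (f (xj - 2*h) - 4*f (xj - h) + 3*f xj) ^ 2)) + 6/10*(|((13/12) * (f (xj - 2*h) - 2*f (xj - h) + f xj) ^ 2 + (1/4) * (f (xj - 2*h) - 4*f (xj - h) + 3*f xj) ^ 2) - ((13/12) * (f xj - 2*f (xj + h) + f (xj + 2*h)) ^ 2 + (1/4) * (3*f xj - 4*f (xj + h) + f (xj + 2*h)) ^ 2)| / ((13/12) * (f (xj - h) - 2*f xj + f (xj + h)) ^ 2 + (1/4) * (f (xj + h) - f (xj - h)) ^ 2)) + 3/10*(|((13/12) * (f (xj - 2*h) - 2*f (xj - h) + f xj) ^ 2 + (1/4) * (f (xj - 2*h) - 4*f (xj - h) + 3*f xj) ^ 2) -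 ((13/12) * (f xj - 2*f (xj + h) + f (xj + 2*h)) ^ 2 + (1/4) * (3*f xj - 4*f (xj + h) + f (xj + 2*h)) ^ 2)| / ((13/12) * (f xj - 2*f (xj + h) + f (xj + 2*h)) ^ 2 + (1/4) * (3*f xj - 4*f (xj + h) + f (xj + 2*h)) ^ 2)))) =O[𝓝[>] (0:ℝ)] fun h => h^3 :=
      (hdiv2.const_mul_left (3/10)).sub (hEO.const_mul_left (3/10))
    have final : ∀ (g : ℝ) (ek : ℝ → ℝ),
        ((fun h : ℝ => g*ek h - g*(1/10*(|((13/12) * (f (xj - 2*h) - 2*f (xj - h) + f xj) ^ 2 + (1/4) * (f (xj - 2*h) - 4*f (xj - h) + 3*f xj) ^ 2) - ((13/12) * (f xj - 2*f (xj + h) + f (xj + 2*h)) ^ 2 + (1/4) * (3*f xj - 4*f (xj + h) + f (xj + 2*h)) ^ 2)| / ((13/12) * (f (xj - 2*h) - 2*f (xj - h) + f xj) ^ 2 + (1/4) * (f (xj - 2*h) - 4*f (xj - h) + 3*f xj) ^ 2)) + 6/10*(|((13/12) * (f (xj - 2*h) - 2*f (xj - h) + f xj) ^ 2 + (1/4)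 * (f (xj - 2*h) - 4*f (xj - h) + 3*f xj) ^ 2) - ((13/12) * (f xj - 2*f (xj + h) + f (xj + 2*h)) ^ 2 + (1/4) * (3*f xj - 4*f (xj + h) + f (xj + 2*h)) ^ 2)| / ((13/12) * (f (xj - h) - 2*f xj + f (xj + h)) ^ 2 + (1/4) * (f (xj + h) - f (xj - h)) ^ 2)) + 3/10*(|((13/12) * (f (xj - 2*h) - 2*f (xj - h) + f xj) ^ 2 + (1/4) * (f (xj - 2*h) - 4*f (xj - h) + 3*f xj) ^ 2) - ((13/12) * (f xj - 2*f (xj + h) + f (xj + 2*h)) ^ 2 + (1/4) * (3*f xj - 4*f (xj + h) + f (xj + 2*h)) ^ 2)| / ((13/12) * (f xj - 2*f (xj + h) + f (xj + 2*h)) ^ 2 + (1/4) * (3*f xj - 4*f (xj + h) + f (xj + 2*h)) ^ 2))))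
          =O[𝓝[>] (0:ℝ)] fun h => h^3) →
        (fun h : ℝ => g*(1 + ek h) /
            (1/10*(1 + (|((13/12) * (f (xj - 2*h) - 2*f (xj - h) + f xj) ^ 2 + (1/4) * (f (xj - 2*h) - 4*f (xj - h) + 3*f xj) ^ 2) - ((13/12) * (f xj - 2*f (xj + h) + f (xj + 2*h)) ^ 2 + (1/4) * (3*f xj - 4*f (xj + h) + f (xj + 2*h)) ^ 2)| / ((13/12) * (f (xj - 2*h) - 2*f (xj - h) + f xj) ^ 2 + (1/4) * (f (xj - 2*h) - 4*f (xj - h) + 3*f xj) ^ 2))) + 6/10*(1 + (|((13/12) * (f (xj - 2*h) - 2*f (xj - h) + f xj) ^ 2 + (1/4) * (f (xj - 2*h) - 4*f (xj - h) + 3*f xj) ^ 2) - ((13/12) * (f xj - 2*f (xj + h) + f (xj + 2*h)) ^ 2 + (1/4) * (3*f xj - 4*f (xj + h) + f (xj + 2*h)) ^ 2)| / ((13/12) * (f (xj - h) - 2*f xj + f (xj + h)) ^ 2 + (1/4) * (f (xj + h) - f (xj - h)) ^ 2))) + 3/10*(1 + (|((13/12) * (f (xj - 2*h) - 2*f (xj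 - h) + f xj) ^ 2 + (1/4) * (f (xj - 2*h) - 4*f (xj - h) + 3*f xj) ^ 2) - ((13/12) * (f xj - 2*f (xj + h) + f (xj + 2*h)) ^ 2 + (1/4) * (3*f xj - 4*f (xj + h) + f (xj + 2*h)) ^ 2)| / ((13/12) * (f xj - 2*f (xj + h) + f (xj + 2*h)) ^ 2 + (1/4) * (3*f xj - 4*f (xj + h) + f (xj + 2*h)) ^ 2)))) - g)
          =O[𝓝[>] (0:ℝ)] fun h => h^3 := by
      intro g ek hN
      obtain ⟨C, hC⟩ := isBigO_iff.mp hN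
      rw [isBigO_iff]
      refine ⟨2*C, ?_⟩
      filter_upwards [hC, hEb] with h h1 h2
      set s0 : ℝ := (|((13/12) * (f (xj - 2*h) - 2*f (xj - h) + f xj) ^ 2 + (1/4) * (f (xj - 2*h) - 4*f (xj - h) + 3*f xj) ^ 2) - ((13/12) * (f xj - 2*f (xj + h) + f (xj + 2*h)) ^ 2 + (1/4) * (3*f xj - 4*f (xj + h) + f (xj + 2*h)) ^ 2)| / ((13/12) * (f (xj - 2*h) - 2*f (xj - h) + f xj) ^ 2 + (1/4) * (f (xj - 2*h) - 4*f (xj - h) + 3*f xj) ^ 2)) with hs0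
      set s1 : ℝ := (|((13/12) * (f (xj - 2*h) - 2*f (xj - h) + f xj) ^ 2 + (1/4) * (f (xj - 2*h) - 4*f (xj - h) + 3*f xj) ^ 2) - ((13/12) * (f xj - 2*f (xj + h) + f (xj + 2*h)) ^ 2 + (1/4) * (3*f xj - 4*f (xj + h) + f (xj + 2*h)) ^ 2)| / ((13/12) * (f (xj - h) - 2*f xj + f (xj + h)) ^ 2 + (1/4) * (f (xj + h) - f (xj - h)) ^ 2)) with hs1
      set s2 : ℝ := (|((13/12) * (f (xj - 2*h) - 2*f (xj - h) + f xj) ^ 2 + (1/4) * (f (xj - 2*h) - 4*f (xj - h) + 3*f xj) ^ 2) - ((13/12) * (f xj - 2*f (xj + h) + f (xj + 2*h)) ^ 2 + (1/4) * (3*f xj - 4*f (xj + h) + f (xj + 2*h)) ^ 2)| / ((13/12) * (f xj - 2*f (xj + h) + f (xj + 2*h)) ^ 2 + (1/4) * (3*f xj - 4*f (xj + h) + f (xj + 2*h)) ^ 2)) with hs2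
      have habs := abs_lt.mp h2
      have hSge : (1:ℝ)/2 ≤ 1/10*(1 + s0) + 6/10*(1 + s1) + 3/10*(1 + s2) := by linarith
      have hSpos : (0:ℝ) < 1/10*(1 + s0) + 6/10*(1 + s1) + 3/10*(1 + s2) := by linarith
      have hSne : (1/10*(1 + s0) + 6/10*(1 + s1) + 3/10*(1 + s2)) ≠ 0 := ne_of_gt hSpos
      have heq : g*(1 + ek h) / (1/10*(1 + s0) + 6/10*(1 + s1) + 3/10*(1 + s2)) - g
          = (g*ek h - g*(1/10*s0 + 6/10*s1 + 3/10*s2))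
            / (1/10*(1 + s0) + 6/10*(1 + s1) + 3/10*(1 + s2)) := by
        rw [eq_div_iff hSne, sub_mul, div_mul_cancel₀ _ hSne]
        ring
      rw [heq, Real.norm_eq_abs, abs_div, abs_of_pos hSpos]
      rw [Real.norm_eq_abs] at h1
      have hnn : (0:ℝ) ≤ |g*ek h - g*(1/10*s0 + 6/10*s1 + 3/10*s2)| := abs_nonneg _
      calc |g*ek h - g*(1/10*s0 + 6/10*s1 + 3/10*s2)|
            / (1/10*(1 + s0) + 6/10*(1 + s1) + 3/10*(1 + s2))
          ≤ |g*ek h - g*(1/10*s0 + 6/10*s1 + 3/10*s2)| / (1/2) :=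
            div_le_div_of_nonneg_left hnn (by norm_num) hSge
      _ = 2 * |g*ek h - g*(1/10*s0 + 6/10*s1 + 3/10*s2)| := by ring
      _ ≤ 2 * (C * ‖h^3‖) := by linarith
      _ = 2*C*‖h^3‖ := by ring
    intro k
    fin_cases k <;>
      simp only [ω, α, γ, τ, β, Fin.sum_univ_three, Matrix.cons_val_zero, Matrix.cons_val_one,
        Matrix.head_cons, Matrix.cons_val_two, Matrix.tail_cons, Fin.isValue]
    · exact final (1/10) (fun h => (|((13/12) * (f (xj - 2*h) - 2*f (xj - h) + f xj) ^ 2 + (1/4) * (f (xj - 2*h) - 4*f (xj - h) + 3*f xj) ^ 2) - ((13/12) * (f xj - 2*f (xj + h) + f (xj + 2*h)) ^ 2 + (1/4) * (3*f xj - 4*f (xj + h) + f (xj + 2*h)) ^ 2)| / ((13/12) * (f (xj - 2*h) - 2*f (xj - h) + f xj) ^ 2 + (1/4) * (f (xj - 2*h) - 4*f (xj - h) + 3*f xj) ^ 2))) hN0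
    · exact final (6/10) (fun h => (|((13/12) * (f (xj - 2*h) - 2*f (xj - h) + f xj) ^ 2 + (1/4) * (f (xj - 2*h) - 4*f (xj - h) + 3*f xj) ^ 2) - ((13/12) * (f xj - 2*f (xj + h) + f (xj + 2*h)) ^ 2 + (1/4) * (3*f xj - 4*f (xj + h) + f (xj + 2*h)) ^ 2)| / ((13/12) * (f (xj - h) - 2*f xj + f (xj + h)) ^ 2 + (1/4) * (f (xj + h) - f (xj - h)) ^ 2))) hN1
    · exact final (3/10) (fun h => (|((13/12) * (f (xj - 2*h) - 2*f (xj - h) + f xj) ^ 2 + (1/4) * (f (xj - 2*h) - 4*f (xj - h) + 3*f xj) ^ 2) - ((13/12) * (f xj - 2*f (xj + h) + f (xj + 2*h)) ^ 2 + (1/4) * (3*f xj - 4*f (xj + h) + f (xj + 2*h)) ^ 2)| / ((13/12) * (f xj - 2*f (xj + h) + f (xj + 2*h)) ^ 2 + (1/4) * (3*f xj - 4*f (xj + h) + f (xj + 2*h)) ^ 2))) hN2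

theorem wenoZ_weights_accuracy (f : ℝ → ℝ) (xj : ℝ) (hf : ContDiffAt ℝ 6 f xj)
    (h1 : deriv f xj ≠ 0)
    (h23 : iteratedDeriv 2 f xj * iteratedDeriv 3 f xj ≠ 0) :
    (let β : ℝ → Fin 3 → ℝ := fun Δx => ![
      (13/12) * (f (xj - 2 * Δx) - 2 * f (xj - Δx) + f xj) ^ 2
        + (1/4) * (f (xj - 2 * Δx) - 4 * f (xj - Δx) + 3 * f xj) ^ 2,
      (13/12) * (f (xj - Δx) - 2 * f xj + f (xj + Δx)) ^ 2
        + (1/4) * (f (xj + Δx) - f (xj - Δx)) ^ 2,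
      (13/12) * (f xj - 2 * f (xj + Δx) + f (xj + 2 * Δx)) ^ 2
        + (1/4) * (3 * f xj - 4 * f (xj + Δx) + f (xj + 2 * Δx)) ^ 2];
    let τ : ℝ → ℝ := fun Δx => |β Δx 0 - β Δx 2|;
    let γ : Fin 3 → ℝ := ![1/10, 6/10, 3/10];
    let α : ℝ → Fin 3 → ℝ := fun Δx k => γ k * (1 + τ Δx / β Δx k);
    let ω : ℝ → Fin 3 → ℝ := fun Δx k => α Δx k / ∑ l, α Δx l;
    (∀ k : Fin 3, (fun Δx => τ Δx / β Δx k) =O[𝓝[>] (0 : ℝ)] fun Δx => Δx ^ 3) ∧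
    (∀ k : Fin 3, (fun Δx => ω Δx k - γ k) =O[𝓝[>] (0 : ℝ)] fun Δx => Δx ^ 3)) := by
  have T := taylor_peano4 hf
  have key : ∀ m : ℝ, m ≠ 0 →
      (fun h : ℝ => f (xj + m*h) - (f xj + deriv f xj * (m*h)
        + iteratedDeriv 2 f xj / 2 * (m*h)^2 + iteratedDeriv 3 f xj / 6 * (m*h)^3
        + iteratedDeriv 4 f xj / 24 * (m*h)^4)) =o[𝓝 (0:ℝ)] fun h => h^4 := by
    intro m hm
    have hcont : Continuous fun h : ℝ => xj + m*h := by fun_prop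
    have hcomp : Tendsto (fun h : ℝ => xj + m*h) (𝓝 0) (𝓝 xj) := by
      simpa using hcont.tendsto 0
    have K := T.comp_tendsto hcomp
    have K2 := K.congr (f₂ := fun h : ℝ => f (xj + m*h) - (f xj + deriv f xj * (m*h)
        + iteratedDeriv 2 f xj / 2 * (m*h)^2 + iteratedDeriv 3 f xj / 6 * (m*h)^3
        + iteratedDeriv 4 f xj / 24 * (m*h)^4))
      (g₂ := fun h : ℝ => m^4 * h^4) (fun h => by simp only [Function.comp_apply]; ring) (fun h => by simp only [Function.comp_apply]; ring)
    exact (isLittleO_const_mul_right_iff (pow_ne_zero 4 hm)).mp K2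
  have K1 : (fun h : ℝ => f (xj + h) - (f xj + deriv f xj * h
      + iteratedDeriv 2 f xj / 2 * h^2 + iteratedDeriv 3 f xj / 6 * h^3
      + iteratedDeriv 4 f xj / 24 * h^4)) =o[𝓝 (0:ℝ)] fun h => h^4 := by
    have k1 := key 1 one_ne_zero
    have heq : (fun h : ℝ => f (xj + 1*h) - (f xj + deriv f xj * (1*h)
        + iteratedDeriv 2 f xj / 2 * (1*h)^2 + iteratedDeriv 3 f xj / 6 * (1*h)^3
        + iteratedDeriv 4 f xj / 24 * (1*h)^4))
        = fun h : ℝ => f (xj + h) - (f xj + deriv f xj * h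
        + iteratedDeriv 2 f xj / 2 * h^2 + iteratedDeriv 3 f xj / 6 * h^3
        + iteratedDeriv 4 f xj / 24 * h^4) := by
      funext h; rw [show xj + 1*h = xj + h by ring]; ring
    rwa [heq] at k1
  have K2 : (fun h : ℝ => f (xj + 2*h) - (f xj + 2*deriv f xj*h
      + 2*iteratedDeriv 2 f xj*h^2 + 4/3*iteratedDeriv 3 f xj*h^3
      + 2/3*iteratedDeriv 4 f xj*h^4)) =o[𝓝 (0:ℝ)] fun h => h^4 :=
    (key 2 two_ne_zero).congr_left (fun h => by ring)
  have Km1 : (fun h : ℝ => f (xj - h) - (f xj - deriv f xj * h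
      + iteratedDeriv 2 f xj / 2 * h^2 - iteratedDeriv 3 f xj / 6 * h^3
      + iteratedDeriv 4 f xj / 24 * h^4)) =o[𝓝 (0:ℝ)] fun h => h^4 := by
    have k1 := key (-1) (by norm_num)
    have heq : (fun h : ℝ => f (xj + (-1)*h) - (f xj + deriv f xj * ((-1)*h)
        + iteratedDeriv 2 f xj / 2 * ((-1)*h)^2 + iteratedDeriv 3 f xj / 6 * ((-1)*h)^3
        + iteratedDeriv 4 f xj / 24 * ((-1)*h)^4))
        = fun h : ℝ => f (xj - h) - (f xj - deriv f xj * h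
        + iteratedDeriv 2 f xj / 2 * h^2 - iteratedDeriv 3 f xj / 6 * h^3
        + iteratedDeriv 4 f xj / 24 * h^4) := by
      funext h; rw [show xj + (-1)*h = xj - h by ring]; ring
    rwa [heq] at k1
  have Km2 : (fun h : ℝ => f (xj - 2*h) - (f xj - 2*deriv f xj*h
      + 2*iteratedDeriv 2 f xj*h^2 - 4/3*iteratedDeriv 3 f xj*h^3
      + 2/3*iteratedDeriv 4 f xj*h^4)) =o[𝓝 (0:ℝ)] fun h => h^4 := by
    have k1 := key (-2) (by norm_num)
    have heq : (fun h : ℝ => f (xj + (-2)*h) - (f xj + deriv f xj * ((-2)*h)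
        + iteratedDeriv 2 f xj / 2 * ((-2)*h)^2 + iteratedDeriv 3 f xj / 6 * ((-2)*h)^3
        + iteratedDeriv 4 f xj / 24 * ((-2)*h)^4))
        = fun h : ℝ => f (xj - 2*h) - (f xj - 2*deriv f xj*h
        + 2*iteratedDeriv 2 f xj*h^2 - 4/3*iteratedDeriv 3 f xj*h^3
        + 2/3*iteratedDeriv 4 f xj*h^4) := by
      funext h; rw [show xj + (-2)*h = xj - 2*h by ring]; ring
    rwa [heq] at k1
  exact core f xj (f xj) (deriv f xj) (iteratedDeriv 2 f xj) (iteratedDeriv 3 f xj)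
    (iteratedDeriv 4 f xj) rfl h1 K1 K2 Km1 Km2
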